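/- The family of regular languages is closed under iterated m-bounded right k-hairpin incompletion: if L ⊆ V* is regular, then rHI*_{m,k}(L) is regular, for all m, k ≥ 1. -/

import Mathlib

open scoped Classical

namespace Hairpin

variable {V : Type}

/-- Reversed complement of a word under the involution `bar`. -/
def rc (bar : V → V) (w : List V) : List V := (w.map bar).reverse

/-- `w` admits a right hairpin decomposition `w = δγαβᾱ^R` with `|α| = k`, `|γ| ≤ m`. -/
def hasRightDecomp (bar : V → V) (m k : ℕ) (w : List V) : Prop :=
  ∃ δ γ α β : List V, w = δ ++ γ ++ α ++ β ++ rc bar α ∧ α.length = k ∧ γ.length ≤ m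

def hasLeftDecomp (bar : V → V) (m k : ℕ) (w : List V) : Prop :=
  ∃ α β γ δ : List V, w = α ++ β ++ rc bar α ++ γ ++ δ ∧ α.length = k ∧ γ.length ≤ m

/-- m-bounded right k-hairpin incompletion. -/
noncomputable def rHI (bar : V → V) (m k : ℕ) (w : List V) : Set (List V) :=
  if hasRightDecomp bar m k w then
    { v | ∃ δ γ α β : List V, w = δ ++ γ ++ α ++ β ++ rc bar α ∧ α.length = k ∧
          γ.length ≤ m ∧ v = w ++ rc bar γ }
  else {w}

/-- m-bounded left k-hairpin incompletion. -/
noncomputable def lHI (bar : V → V) (m k : ℕ) (w : List V) : Set (List V) :=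
  if hasLeftDecomp bar m k w then
    { v | ∃ α β γ δ : List V, w = α ++ β ++ rc bar α ++ γ ++ δ ∧ α.length = k ∧
          γ.length ≤ m ∧ v = rc bar γ ++ w }
  else {w}

/-- m-bounded k-hairpin incompletion. -/
noncomputable def HI (bar : V → V) (m k : ℕ) (w : List V) : Set (List V) :=
  rHI bar m k w ∪ lHI bar m k w

noncomputable def rHIn (bar : V → V) (m k : ℕ) (w : List V) : ℕ → Set (List V)
  | 0 => {w}
  | n + 1 => ⋃ v ∈ rHIn bar m k w n, rHI bar m k v

noncomputable def rHIstar (bar : V → V) (m k : ℕ) (w : List V) : Set (List V) :=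
  ⋃ n, rHIn bar m k w n

noncomputable def HIn (bar : V → V) (m k : ℕ) (w : List V) : ℕ → Set (List V)
  | 0 => {w}
  | n + 1 => ⋃ v ∈ HIn bar m k w n, HI bar m k v

noncomputable def HIstar (bar : V → V) (m k : ℕ) (w : List V) : Set (List V) :=
  ⋃ n, HIn bar m k w n

noncomputable def rHIstarL (bar : V → V) (m k : ℕ) (L : Set (List V)) : Set (List V) :=
  ⋃ w ∈ L, rHIstar bar m k w

noncomputable def HIL (bar : V → V) (m k : ℕ) (L : Set (List V)) : Set (List V) :=
  ⋃ w ∈ L, HI bar m k w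

noncomputable def HIstarL (bar : V → V) (m k : ℕ) (L : Set (List V)) : Set (List V) :=
  ⋃ w ∈ L, HIstar bar m k w

/-- The set `C_{m,k}(w)`. -/
def Cmk (bar : V → V) (m k : ℕ) (w : List V) : Set (List V × List V) :=
  { p | ∃ x y w₁ w₂ z : List V,
      x.length ≤ m ∧ y.length = k ∧ w = w₁ ++ (x ++ y) ++ w₂ ∧
      z.length ≤ k ∧ z <:+ w₂ ∧ z <+: rc bar y ∧ p = (x ++ y, z) }

/-- The suffix component of `D_{m,k}(w)`: all suffixes of `w` of length `i+k-1`, `0 ≤ i ≤ m`. -/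
def DmkSuf (m k : ℕ) (w : List V) : Set (List V) :=
  { s | ∃ i ≤ m, s.length = i + k - 1 ∧ s <:+ w }

noncomputable def Dmk (bar : V → V) (m k : ℕ) (w : List V) :
    Set (List V × List V) × Set (List V) :=
  (Cmk bar m k w, DmkSuf m k w)

/-- The set `C'_{m,k}(w)`. -/
def Cmk' (bar : V → V) (m k : ℕ) (w : List V) : Set (List V × List V) :=
  { p | ∃ x y w₁ w₂ z : List V,
      x.length ≤ m ∧ y.length = k ∧ w = w₁ ++ (y ++ x) ++ w₂ ∧
      z.length ≤ k ∧ z <+: w₁ ∧ z <:+ rc bar y ∧ p = (z, y ++ x) }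

/-- The prefix component of `D'_{m,k}(w)`. -/
def DmkPref (m k : ℕ) (w : List V) : Set (List V) :=
  { s | ∃ i ≤ m, s.length = i + k - 1 ∧ s <+: w }

noncomputable def Dmk' (bar : V → V) (m k : ℕ) (w : List V) :
    Set (List V × List V) × Set (List V) :=
  (Cmk' bar m k w, DmkPref m k w)

noncomputable def Emk (bar : V → V) (m k : ℕ) (w : List V) :=
  (Dmk bar m k w, Dmk' bar m k w)


/-- View a set of words as a `Language`. -/
def lang {V : Type} (L : Set (List V)) : Language V := L


variable {V : Type}


theorem isRegular_of_finite_range {α : Type} {St : Type} (f : List α → St) (M : Language α)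
    (hfin : (Set.range f).Finite)
    (hcong : ∀ u v, f u = f v → ∀ a, f (u ++ [a]) = f (v ++ [a]))
    (hmem : ∀ u v, f u = f v → (u ∈ M ↔ v ∈ M)) : M.IsRegular := by
  classical
  have hU : ∀ q : ↥(Set.range f), ∃ u, f u = (q : St) := fun q => q.2
  set U : ↥(Set.range f) → List α := fun q => Classical.choose (hU q) with hUdef
  have hUs : ∀ q, f (U q) = (q : St) := fun q => Classical.choose_spec (hU q)
  set D : DFA α ↥(Set.range f) :=
    { step := fun q a => ⟨f (U q ++ [a]), Set.mem_range_self _⟩,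
      start := ⟨f [], Set.mem_range_self _⟩,
      accept := {q | U q ∈ M} } with hD
  refine ⟨↥(Set.range f), hfin.fintype, D, ?_⟩
  have heval : ∀ u, D.eval u = (⟨f u, Set.mem_range_self u⟩ : ↥(Set.range f)) := by
    intro u
    induction u using List.reverseRecOn with
    | nil => rfl
    | append_singleton u a ih =>
        rw [DFA.eval_append_singleton, ih]
        exact Subtype.ext (hcong _ _ (hUs ⟨f u, Set.mem_range_self u⟩) a)
  ext x
  rw [DFA.mem_accepts, heval]
  exact hmem _ _ (hUs ⟨f x, Set.mem_range_self x⟩)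

def rt (l : List V) (n : ℕ) : List V := l.drop (l.length - n)

def trunc (k : ℕ) (l : List V) : List V := l.take (l.length - k)

@[simp] theorem rt_length (l : List V) (n : ℕ) : (rt l n).length = min n l.length := by
  simp [rt]; omega

theorem rt_suffix (l : List V) (n : ℕ) : rt l n <:+ l := List.drop_suffix _ _

theorem rt_eq_self {l : List V} {n : ℕ} (h : l.length ≤ n) : rt l n = l := by
  simp [rt, Nat.sub_eq_zero_of_le h]

theorem rt_append_self {l₁ l₂ : List V} {n : ℕ} (h : l₂.length = n) :
    rt (l₁ ++ l₂) n = l₂ := by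
  have : (l₁ ++ l₂).length - n = l₁.length := by simp; omega
  rw [rt, this]; exact List.drop_left

theorem take_append_rt (l : List V) (k : ℕ) : trunc k l ++ rt l k = l :=
  List.take_append_drop _ _

theorem suffix_eq_of_length {l₁ l₂ l₃ : List V} (h₁ : l₁ <:+ l₃) (h₂ : l₂ <:+ l₃)
    (h : l₁.length = l₂.length) : l₁ = l₂ := by
  rcases List.suffix_or_suffix_of_suffix h₁ h₂ with h' | h'
  · exact h'.eq_of_length h
  · exact (h'.eq_of_length h.symm).symm

theorem suffix_append_right {s x : List V} (h : s <:+ x) (y : List V) :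
    s ++ y <:+ x ++ y := by
  obtain ⟨p, rfl⟩ := h
  exact ⟨p, by simp⟩

theorem suffix_iff_suffix_rt {l W : List V} {j : ℕ} :
    (l <:+ W ∧ l.length ≤ j) ↔ l <:+ rt W j := by
  constructor
  · rintro ⟨h, hj⟩
    rcases List.suffix_or_suffix_of_suffix h (rt_suffix W j) with h' | h'
    · exact h'
    · have hlen : (rt W j).length = min j W.length := rt_length W j
      have : l.length = (rt W j).length := by
        have := h'.length_le; have := h.length_le; omega
      exact (suffix_eq_of_length h (rt_suffix W j) this) ▸ List.suffix_rfl
  · intro h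
    refine ⟨h.trans (rt_suffix W j), ?_⟩
    have := h.length_le; simp at this; omega

theorem rt_rt (l : List V) (n j : ℕ) : rt (rt l n) j = rt l (min j n) := by
  unfold rt
  rw [List.drop_drop]
  congr 1
  simp; omega

theorem rt_append_rt (x y : List V) (n : ℕ) : rt (x ++ y) n = rt (rt x n ++ y) n := by
  refine suffix_eq_of_length (l₃ := x ++ y) (rt_suffix _ _)
    ((rt_suffix _ _).trans (suffix_append_right (rt_suffix x n) y)) (by simp; omega)

theorem trunc_rt {l : List V} {n k : ℕ} (h : k ≤ n) :
    trunc k (rt l n) = rt (trunc k l) (n - k) := by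
  unfold trunc rt
  rw [List.drop_take]
  have h1 : l.length - n = (l.take (l.length - k)).length - (n - k) := by simp; omega
  rw [← h1]
  congr 1
  simp; omega

theorem infix_concat {l W : List V} {c : V} :
    l <:+: W ++ [c] ↔ l <:+: W ∨ l <:+ W ++ [c] := by
  constructor
  · rintro ⟨p, q, h⟩
    rcases eq_or_ne q [] with rfl | hq
    · right; exact ⟨p, by simpa using h⟩
    · left
      have h2 : (p ++ l ++ q.dropLast) ++ [q.getLast hq] = W ++ [c] := by
        rw [← h]; simp [List.dropLast_append_getLast hq]
      have := (List.append_inj' h2 rfl).1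
      exact ⟨p, q.dropLast, this⟩
  · rintro (h | h)
    · exact h.trans ⟨[], [c], by simp⟩
    · exact h.isInfix


theorem rc_length (bar : V → V) (l : List V) : (rc bar l).length = l.length := by simp [rc]

theorem rc_rc {bar : V → V} (hbar : ∀ a, bar (bar a) = a) (l : List V) :
    rc bar (rc bar l) = l := by
  have hb : bar ∘ bar = id := funext hbar
  simp [rc, List.map_reverse, List.map_map, hb]

/-- The set of `γ`'s witnessing a right decomposition. -/
def Gam (bar : V → V) (m k : ℕ) (x : List V) : Set (List V) :=
  {γ | γ.length ≤ m ∧ k ≤ x.length ∧ (γ ++ rc bar (rt x k)) <:+: trunc k x}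

/-- One-step appendable words. -/
def Pset (bar : V → V) (m k : ℕ) (x : List V) : Set (List V) :=
  insert [] (rc bar '' Gam bar m k x)

theorem decomp_iff_mem_Gam {bar : V → V} (hbar : ∀ a, bar (bar a) = a) (m k : ℕ)
    (w γ : List V) :
    (∃ δ α β : List V, w = δ ++ γ ++ α ++ β ++ rc bar α ∧ α.length = k ∧ γ.length ≤ m) ↔
      γ ∈ Gam bar m k w := by
  constructor
  · rintro ⟨δ, α, β, hw, hα, hγ⟩
    have hw' : w = (δ ++ γ ++ α ++ β) ++ rc bar α := hw
    have hrclen : (rc bar α).length = k := by rw [rc_length]; exact hα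
    have hrt : rt w k = rc bar α := by rw [hw']; exact rt_append_self hrclen
    have hlen : k ≤ w.length := by rw [hw']; simp [hrclen]; omega
    have htr : trunc k w = δ ++ γ ++ α ++ β := by
      rw [hw', trunc]
      have : ((δ ++ γ ++ α ++ β) ++ rc bar α).length - k = (δ ++ γ ++ α ++ β).length := by
        simp [hrclen]
        omega
      rw [this]
      exact List.take_left' rfl
    refine ⟨hγ, hlen, ?_⟩
    rw [hrt, rc_rc hbar, htr]
    exact ⟨δ, β, by simp [List.append_assoc]⟩
  · rintro ⟨hγ, hk, p, q, hinf⟩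
    refine ⟨p, rc bar (rt w k), q, ?_, ?_, hγ⟩
    · rw [rc_rc hbar]
      conv_lhs => rw [← take_append_rt w k, ← hinf]
      simp [List.append_assoc]
    · rw [rc_length, rt_length]; omega

theorem hasRightDecomp_iff_Gam {bar : V → V} (hbar : ∀ a, bar (bar a) = a) (m k : ℕ)
    (w : List V) : hasRightDecomp bar m k w ↔ (Gam bar m k w).Nonempty := by
  constructor
  · rintro ⟨δ, γ, α, β, hw, hα, hγ⟩
    exact ⟨γ, (decomp_iff_mem_Gam hbar m k w γ).1 ⟨δ, α, β, hw, hα, hγ⟩⟩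
  · rintro ⟨γ, hγ⟩
    obtain ⟨δ, α, β, hw, hα, hγ'⟩ := (decomp_iff_mem_Gam hbar m k w γ).2 hγ
    exact ⟨δ, γ, α, β, hw, hα, hγ'⟩

theorem nil_mem_Gam {bar : V → V} {m k : ℕ} {w γ : List V} (h : γ ∈ Gam bar m k w) :
    [] ∈ Gam bar m k w := by
  obtain ⟨hγ, hk, hinf⟩ := h
  exact ⟨by simp, hk, (List.suffix_append γ _).isInfix.trans hinf⟩

theorem Pset_length {bar : V → V} {m k : ℕ} {x u : List V} (h : u ∈ Pset bar m k x) :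
    u.length ≤ m := by
  rcases h with rfl | ⟨γ, hγ, rfl⟩
  · simp
  · rw [rc_length]; exact hγ.1

theorem rHI_eq {bar : V → V} (hbar : ∀ a, bar (bar a) = a) (m k : ℕ) (w : List V) :
    rHI bar m k w = (fun t => w ++ t) '' Pset bar m k w := by
  by_cases h : hasRightDecomp bar m k w
  · rw [rHI, if_pos h]
    ext v
    constructor
    · rintro ⟨δ, γ, α, β, hw, hα, hγ, hv⟩
      have hγG : γ ∈ Gam bar m k w := (decomp_iff_mem_Gam hbar m k w γ).1 ⟨δ, α, β, hw, hα, hγ⟩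
      exact ⟨rc bar γ, Set.mem_insert_of_mem _ ⟨γ, hγG, rfl⟩, hv.symm⟩
    · rintro ⟨t, ht, rfl⟩
      rcases ht with rfl | ⟨γ, hγ, rfl⟩
      · obtain ⟨γ₀, hγ₀⟩ := (hasRightDecomp_iff_Gam hbar m k w).1 h
        obtain ⟨δ, α, β, hw, hα, hγ'⟩ :=
          (decomp_iff_mem_Gam hbar m k w []).2 (nil_mem_Gam hγ₀)
        exact ⟨δ, [], α, β, hw, hα, hγ', by simp [rc]⟩
      · obtain ⟨δ, α, β, hw, hα, hγ'⟩ := (decomp_iff_mem_Gam hbar m k w γ).2 hγ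
        exact ⟨δ, γ, α, β, hw, hα, hγ', rfl⟩
  · rw [rHI, if_neg h]
    have hG : Gam bar m k w = ∅ := by
      by_contra hne
      exact h ((hasRightDecomp_iff_Gam hbar m k w).2 (Set.nonempty_iff_ne_empty.2 hne))
    ext v
    simp [Pset, hG]

/-- Abstract iteration: the possible "tails" appended to `w`. -/
inductive TT (bar : V → V) (m k : ℕ) (w : List V) : List V → Prop
  | nil : TT bar m k w []
  | snoc {t u : List V} : TT bar m k w t → u ∈ Pset bar m k (w ++ t) → TT bar m k w (t ++ u)

theorem rHIstar_eq {bar : V → V} (hbar : ∀ a, bar (bar a) = a) (m k : ℕ) (w : List V) :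
    rHIstar bar m k w = {x | ∃ t, TT bar m k w t ∧ x = w ++ t} := by
  ext x
  constructor
  · intro hx
    obtain ⟨n, hn⟩ : ∃ n, x ∈ rHIn bar m k w n := by
      simpa [rHIstar, Set.mem_iUnion] using hx
    clear hx
    induction n generalizing x with
    | zero => exact ⟨[], TT.nil, by simpa [rHIn] using hn⟩
    | succ n ih =>
        simp only [rHIn, Set.mem_iUnion] at hn
        obtain ⟨v, hv, hx⟩ := hn
        obtain ⟨t, htt, rfl⟩ := ih v hv
        rw [rHI_eq hbar] at hx
        obtain ⟨u, hu, rfl⟩ := hx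
        exact ⟨t ++ u, TT.snoc htt hu, by simp [List.append_assoc]⟩
  · rintro ⟨t, htt, rfl⟩
    induction htt with
    | nil =>
        refine Set.mem_iUnion.2 ⟨0, ?_⟩
        simp [rHIn]
    | @snoc t u htt hu ih =>
        obtain ⟨n, hn⟩ : ∃ n, w ++ t ∈ rHIn bar m k w n := by
          simpa [rHIstar, Set.mem_iUnion] using ih
        refine Set.mem_iUnion.2 ⟨n + 1, ?_⟩
        simp only [rHIn, Set.mem_iUnion]
        refine ⟨w ++ t, hn, ?_⟩
        rw [rHI_eq hbar]
        exact ⟨u, hu, by simp [List.append_assoc]⟩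

theorem TT_last {bar : V → V} {m k : ℕ} {w t : List V} (h : TT bar m k w t) :
    t = [] ∨ ∃ t' b, TT bar m k w t' ∧ b ∈ Pset bar m k (w ++ t') ∧ b ≠ [] ∧ t = t' ++ b := by
  induction h with
  | nil => exact Or.inl rfl
  | @snoc t u htt hu ih =>
      rcases eq_or_ne u [] with rfl | hne
      · simpa using ih
      · exact Or.inr ⟨t, u, htt, hu, hne, rfl⟩

/-- Factor abstraction: bounded-length infixes of `w` with the last `k` letters removed. -/
def Fset (m k : ℕ) (x : List V) : Set (List V) :=
  {l | l.length ≤ m + k ∧ l <:+: trunc k x}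

/-- The bounded state abstraction. -/
def sigma (m k : ℕ) (x : List V) : Set (List V) × List V :=
  (Fset m k x, rt x (m + 2 * k))

/-- `Pset` computed from the abstraction. -/
def Phat (bar : V → V) (m k : ℕ) (F : Set (List V)) (b : List V) : Set (List V) :=
  insert [] (rc bar '' {γ | γ.length ≤ m ∧ k ≤ b.length ∧ (γ ++ rc bar (rt b k)) ∈ F})

theorem Pset_eq_Phat (bar : V → V) (m k : ℕ) (x : List V) :
    Pset bar m k x = Phat bar m k (sigma m k x).1 (sigma m k x).2 := by
  have h1 : rt (rt x (m + 2 * k)) k = rt x k := by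
    rw [rt_rt]; congr 1; omega
  have h2 : (k ≤ (rt x (m + 2 * k)).length) ↔ k ≤ x.length := by
    rw [rt_length]; omega
  have hsets : {γ | γ.length ≤ m ∧ k ≤ (rt x (m + 2 * k)).length ∧
      (γ ++ rc bar (rt (rt x (m + 2 * k)) k)) ∈ Fset m k x} = Gam bar m k x := by
    ext γ
    simp only [Set.mem_setOf_eq, Gam, Fset, h1, h2]
    constructor
    · rintro ⟨hγ, hkx, _, hinf⟩
      exact ⟨hγ, hkx, hinf⟩
    · rintro ⟨hγ, hkx, hinf⟩
      refine ⟨hγ, hkx, ?_, hinf⟩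
      rw [List.length_append, rc_length, rt_length]
      omega
  unfold Pset Phat sigma
  rw [hsets]

theorem trunc_concat {k : ℕ} (hk : 1 ≤ k) (x : List V) (a : V) :
    ∃ d : List V, d.length ≤ 1 ∧ trunc k (x ++ [a]) = trunc k x ++ d := by
  unfold trunc
  rw [List.take_append]
  rcases le_or_gt k x.length with h1 | h1
  · have e1 : (x ++ [a]).length - k = (x.length - k) + 1 := by simp; omega
    rw [e1]
    have e2 : x.length - k + 1 - x.length = 0 := by omega
    rw [e2, List.take_zero, List.append_nil, List.take_succ]
    refine ⟨x[x.length - k]?.toList, ?_, rfl⟩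
    cases x[x.length - k]? <;> simp
  · have e1 : (x ++ [a]).length - k = 0 := by simp; omega
    have e2 : x.length - k = 0 := by omega
    rw [e1, e2]
    exact ⟨[], by simp, by simp⟩

theorem Fset_step {m k : ℕ} (hk : 1 ≤ k) (x : List V) (a : V) :
    Fset m k (x ++ [a]) =
      Fset m k x ∪ {l | l.length ≤ m + k ∧ l <:+ trunc k (rt (x ++ [a]) (m + 2 * k))} := by
  have htr : trunc k (rt (x ++ [a]) (m + 2 * k)) = rt (trunc k (x ++ [a])) (m + k) := by
    rw [trunc_rt (by omega : k ≤ m + 2 * k)]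
    congr 1
    omega
  obtain ⟨d, hd, hconcat⟩ := trunc_concat hk x a
  ext l
  simp only [Fset, Set.mem_union, Set.mem_setOf_eq, htr]
  constructor
  · rintro ⟨hlen, hinf⟩
    rw [hconcat] at hinf
    have : l <:+: trunc k x ∨ l <:+ trunc k x ++ d := by
      rcases d with _ | ⟨c, _ | ⟨c2, d⟩⟩
      · left; simpa using hinf
      · exact infix_concat.1 hinf
      · simp at hd
    rcases this with h | h
    · exact Or.inl ⟨hlen, h⟩
    · refine Or.inr ⟨hlen, ?_⟩
      rw [← suffix_iff_suffix_rt]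
      rw [hconcat]
      exact ⟨h, hlen⟩
  · rintro (⟨hlen, hinf⟩ | ⟨hlen, hsuf⟩)
    · refine ⟨hlen, hinf.trans ?_⟩
      rw [hconcat]
      exact ⟨[], d, by simp⟩
    · rw [← suffix_iff_suffix_rt] at hsuf
      exact ⟨hlen, hsuf.1.isInfix⟩

theorem sigma_step {m k : ℕ} (hk : 1 ≤ k) (x : List V) (a : V) :
    sigma m k (x ++ [a]) =
      ((sigma m k x).1 ∪
        {l | l.length ≤ m + k ∧ l <:+ trunc k (rt ((sigma m k x).2 ++ [a]) (m + 2 * k))},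
       rt ((sigma m k x).2 ++ [a]) (m + 2 * k)) := by
  have hb : rt (x ++ [a]) (m + 2 * k) = rt (rt x (m + 2 * k) ++ [a]) (m + 2 * k) :=
    rt_append_rt x [a] (m + 2 * k)
  unfold sigma
  rw [Fset_step hk x a, hb]

theorem concat_eq_append {X Y Z : List V} {a : V} (h : X ++ [a] = Y ++ Z) (hZ : Z ≠ []) :
    ∃ Z', Z = Z' ++ [a] ∧ X = Y ++ Z' := by
  have h2 : (Y ++ Z.dropLast) ++ [Z.getLast hZ] = X ++ [a] := by
    rw [List.append_assoc, List.dropLast_append_getLast hZ]; exact h.symm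
  obtain ⟨h3, h4⟩ := List.append_inj' h2 rfl
  have h5 : Z.getLast hZ = a := by injection h4
  refine ⟨Z.dropLast, ?_, h3.symm⟩
  conv_lhs => rw [← List.dropLast_append_getLast hZ]
  rw [h5]

/-- Tracker for all split points witnessing membership in `rHIstarL`. -/
def Hset (bar : V → V) (m k : ℕ) (L : Set (List V)) (u : List V) :
    Set ((Set (List V) × List V) × List V) :=
  {ps | ∃ w t s, w ∈ L ∧ TT bar m k w t ∧ s.length ≤ m ∧ u = w ++ t ++ s ∧
        ps = (sigma m k (w ++ t), s)}

theorem Hset_step (bar : V → V) (m k : ℕ) (L : Set (List V)) (u : List V) (a : V) :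
    Hset bar m k L (u ++ [a]) =
      {ps | ∃ p s, (p, s) ∈ Hset bar m k L u ∧ s.length + 1 ≤ m ∧ ps = (p, s ++ [a])}
      ∪ {ps | ((u ++ [a]) ∈ L ∨
              ∃ p s, (p, s) ∈ Hset bar m k L u ∧ (s ++ [a]) ∈ Phat bar m k p.1 p.2)
              ∧ ps = (sigma m k (u ++ [a]), [])} := by
  ext ps
  constructor
  · rintro ⟨w, t, s', hw, htt, hslen, heq, rfl⟩
    rcases eq_or_ne s' [] with rfl | hne
    · rw [List.append_nil] at heq
      rcases TT_last htt with rfl | ⟨t', b, htt', hb, hbne, rfl⟩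
      · rw [List.append_nil] at heq
        refine Or.inr ⟨Or.inl ?_, ?_⟩
        · rw [heq]; exact hw
        · rw [heq]; simp
      · have heq' : u ++ [a] = (w ++ t') ++ b := by rw [heq]; simp [List.append_assoc]
        obtain ⟨s, rfl, hu⟩ := concat_eq_append heq' hbne
        have hblen : s.length + 1 ≤ m := by
          have := Pset_length hb; simp at this; omega
        refine Or.inr ⟨Or.inr ⟨sigma m k (w ++ t'), s, ?_, ?_⟩, ?_⟩
        · exact ⟨w, t', s, hw, htt', by omega, hu, rfl⟩
        · rw [← Pset_eq_Phat]; exact hb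
        · rw [heq]
    · obtain ⟨s, rfl, hu⟩ := concat_eq_append heq hne
      refine Or.inl ⟨sigma m k (w ++ t), s, ?_, ?_, rfl⟩
      · refine ⟨w, t, s, hw, htt, ?_, hu, rfl⟩
        simp at hslen; omega
      · simp at hslen; omega
  · rintro (⟨p, s, ⟨w, t, s₀, hw, htt, hlen, hu, heq2⟩, hsl, rfl⟩ | ⟨hcond, rfl⟩)
    · have hp : p = sigma m k (w ++ t) := congrArg Prod.fst heq2
      have hs : s = s₀ := congrArg Prod.snd heq2
      subst hp; subst hs
      refine ⟨w, t, s ++ [a], hw, htt, by simp; omega, ?_, rfl⟩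
      rw [hu]; simp [List.append_assoc]
    · rcases hcond with h | ⟨p, s, ⟨w, t, s₀, hw, htt, hlen, hu, heq2⟩, hP⟩
      · exact ⟨u ++ [a], [], [], h, TT.nil, by simp, by simp, by simp⟩
      · have hps : p = sigma m k (w ++ t) ∧ s = s₀ := by
          constructor
          · exact congrArg Prod.fst heq2
          · exact congrArg Prod.snd heq2
        obtain ⟨hp, hs⟩ := hps
        subst hp; subst hs
        rw [← Pset_eq_Phat] at hP
        refine ⟨w, t ++ (s ++ [a]), [], hw, TT.snoc htt hP, by simp, ?_, ?_⟩
        · rw [hu]; simp [List.append_assoc]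
        · have : u ++ [a] = w ++ (t ++ (s ++ [a])) := by rw [hu]; simp [List.append_assoc]
          rw [this]

theorem mem_rHIstarL_iff {bar : V → V} (hbar : ∀ a, bar (bar a) = a) (m k : ℕ)
    (L : Set (List V)) (u : List V) :
    u ∈ rHIstarL bar m k L ↔ ∃ p, (p, ([] : List V)) ∈ Hset bar m k L u := by
  constructor
  · intro hu
    obtain ⟨w, hw, hmem⟩ : ∃ w, w ∈ L ∧ u ∈ rHIstar bar m k w := by
      simpa [rHIstarL, Set.mem_iUnion] using hu
    rw [rHIstar_eq hbar] at hmem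
    obtain ⟨t, htt, rfl⟩ := hmem
    exact ⟨sigma m k (w ++ t), w, t, [], hw, htt, by simp, by simp, rfl⟩
  · rintro ⟨p, w, t, s, hw, htt, hlen, hu, heq⟩
    have hs : s = [] := (congrArg Prod.snd heq).symm
    subst hs
    rw [List.append_nil] at hu
    subst hu
    simp only [rHIstarL, Set.mem_iUnion]
    exact ⟨w, hw, (rHIstar_eq hbar m k w).symm ▸ ⟨t, htt, rfl⟩⟩

theorem sigma_mem (m k : ℕ) (x : List V) :
    sigma m k x ∈ ({F : Set (List V) | F ⊆ {l | l.length ≤ m + k}} ×ˢ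
      {l : List V | l.length ≤ m + 2 * k}) := by
  refine ⟨fun l hl => hl.1, ?_⟩
  simp only [sigma, Set.mem_setOf_eq, rt_length]
  omega

variable [Fintype V] in
theorem regular_closed_rHIstarL_aux (bar : V → V) (hbar : ∀ a, bar (bar a) = a) (m k : ℕ)
    (hm : 1 ≤ m) (hk : 1 ≤ k)
    (L : Set (List V)) (hL : Language.IsRegular (lang L)) :
    Language.IsRegular (lang (rHIstarL bar m k L)) := by
  classical
  obtain ⟨S, fS, ML, hML⟩ := hL
  have hmemL : ∀ x : List V, x ∈ L ↔ ML.eval x ∈ ML.accept := by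
    intro x
    rw [← DFA.mem_accepts, hML]
    exact Iff.rfl
  set f : List V → (Set (List V) × List V) × S × Set ((Set (List V) × List V) × List V) :=
    fun u => (sigma m k u, ML.eval u, Hset bar m k L u) with hf
  apply isRegular_of_finite_range f
  · -- finiteness of the range
    set SigS : Set (Set (List V) × List V) :=
      {F : Set (List V) | F ⊆ {l | l.length ≤ m + k}} ×ˢ {l : List V | l.length ≤ m + 2 * k}
      with hSigS
    have hSigFin : SigS.Finite :=
      ((List.finite_length_le V (m + k)).finite_subsets).prod (List.finite_length_le V (m + 2 * k))
    have hHFin : ({H : Set ((Set (List V) × List V) × List V) |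
        H ⊆ SigS ×ˢ {l : List V | l.length ≤ m}}).Finite :=
      (hSigFin.prod (List.finite_length_le V m)).finite_subsets
    refine Set.Finite.subset (hSigFin.prod (Set.finite_univ.prod hHFin)) ?_
    rintro _ ⟨u, rfl⟩
    refine ⟨sigma_mem m k u, Set.mem_univ _, ?_⟩
    rintro ⟨p, s⟩ ⟨w, t, s₀, hw, htt, hlen, hu, heq⟩
    have hp : p = sigma m k (w ++ t) := congrArg Prod.fst heq
    have hs : s = s₀ := congrArg Prod.snd heq
    subst hp; subst hs
    exact ⟨sigma_mem m k _, hlen⟩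
  · -- right congruence
    intro u v huv a
    have h1 : sigma m k u = sigma m k v := congrArg Prod.fst huv
    have h2 : ML.eval u = ML.eval v := congrArg (fun z => z.2.1) huv
    have h3 : Hset bar m k L u = Hset bar m k L v := congrArg (fun z => z.2.2) huv
    have h4 : sigma m k (u ++ [a]) = sigma m k (v ++ [a]) := by
      rw [sigma_step hk u a, sigma_step hk v a, h1]
    have h5 : ML.eval (u ++ [a]) = ML.eval (v ++ [a]) := by
      rw [DFA.eval_append_singleton, DFA.eval_append_singleton, h2]
    have h6 : ((u ++ [a]) ∈ L) = ((v ++ [a]) ∈ L) := by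
      apply propext
      rw [hmemL, hmemL, DFA.eval_append_singleton, DFA.eval_append_singleton, h2]
    have h7 : Hset bar m k L (u ++ [a]) = Hset bar m k L (v ++ [a]) := by
      rw [Hset_step bar m k L u a, Hset_step bar m k L v a, h3, h4, h6]
    show (sigma m k (u ++ [a]), ML.eval (u ++ [a]), Hset bar m k L (u ++ [a])) =
      (sigma m k (v ++ [a]), ML.eval (v ++ [a]), Hset bar m k L (v ++ [a]))
    rw [h4, h5, h7]
  · -- membership determined by the state
    intro u v huv
    have h3 : Hset bar m k L u = Hset bar m k L v := congrArg (fun z => z.2.2) huv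
    show u ∈ rHIstarL bar m k L ↔ v ∈ rHIstarL bar m k L
    rw [mem_rHIstarL_iff hbar, mem_rHIstarL_iff hbar, h3]



variable {V : Type} [Fintype V]

theorem regular_closed_rHIstarL (bar : V → V) (hbar : ∀ a, bar (bar a) = a) (m k : ℕ) (hm : 1 ≤ m) (hk : 1 ≤ k)
    (L : Set (List V)) (hL : Language.IsRegular (lang L)) :
    Language.IsRegular (lang (rHIstarL bar m k L)) :=
  regular_closed_rHIstarL_aux bar hbar m k hm hk L hL

end Hairpin
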